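/- Convolution of marginals for covariant phase space observables: if M is the covariant phase space observable generated by a density operator σ, i.e., M(Z) = ∫_{(q,p)∈Z} W(q,p) Πσ Π W(q,p)* dq dp/(2πħ), then for every state ρ the position marginal satisfies M^Q_ρ = E^Q_ρ ∗ E^Q_σ and the momentum marginal satisfies M^P_ρ = E^P_ρ ∗ E^P_σ, where ∗ denotes convolution of probability measures on ℝ. -/

import Mathlib

open MeasureTheory

noncomputable section

/-- The Fourier transform (physics convention, `ħ = 1`) of a Schwartz function. -/
def fhat (f : SchwartzMap ℝ ℂ) (p : ℝ) : ℂ :=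
  (1 / Real.sqrt (2 * Real.pi) : ℝ) * ∫ x : ℝ, Complex.exp (-Complex.I * p * x) * f x

/-- The matrix element `⟨ψ, W(q,p) Π φ⟩` of a Weyl operator composed with parity,
where `(W(q,p)Πφ)(x) = e^{−iqp/2 + ipx} φ(q−x)`. -/
def weylMatrixElement (ψ φ : SchwartzMap ℝ ℂ) (q p : ℝ) : ℂ :=
  ∫ x : ℝ, starRingEnd ℂ (ψ x) *
    (Complex.exp (-Complex.I * q * p / 2 + Complex.I * p * x) * φ (q - x))

section Aux

open Complex SchwartzMap Real FourierTransform

/-! ### Schwartz space constructions -/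

lemma affine_temperate (a b : ℝ) : Function.HasTemperateGrowth (fun x : ℝ ↦ a * x + b) := by
  have hd : ∀ x : ℝ, HasFDerivAt (fun x : ℝ ↦ a * x + b)
      ((1 : ℝ →L[ℝ] ℝ).smulRight a) x := by
    intro x
    refine (((hasDerivAt_id x).const_mul a).add_const b).hasFDerivAt.congr_fderiv ?_
    ext; simp
  refine Function.HasTemperateGrowth.of_fderiv ?_ (fun x ↦ (hd x).differentiableAt)
    (k := 1) (C := |a| + |b|) (fun x ↦ ?_)
  · have : (fderiv ℝ fun x : ℝ ↦ a * x + b) = fun _ ↦ (1 : ℝ →L[ℝ] ℝ).smulRight a := by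
      funext x; exact (hd x).fderiv
    rw [this]
    exact .const _
  · have : |a * x + b| ≤ |a| * |x| + |b| := (abs_add_le _ _).trans (by rw [abs_mul])
    refine this.trans ?_
    have h1 : |a| * |x| + |b| ≤ (|a| + |b|) * (1 + |x|) := by
      nlinarith [abs_nonneg a, abs_nonneg b, abs_nonneg x]
    simpa using h1

/-- Precomposition of a Schwartz function with a nontrivial affine map. -/
def affineCLM (a b : ℝ) (ha : a ≠ 0) : 𝓢(ℝ, ℂ) →L[ℝ] 𝓢(ℝ, ℂ) :=
  SchwartzMap.compCLM ℝ (affine_temperate a b)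
    ⟨1, |a|⁻¹ * (1 + |b|), fun x ↦ by
      have ha' : (0:ℝ) < |a|⁻¹ := by
        rw [inv_pos, abs_pos]; exact ha
      have h0 : |x| = |a|⁻¹ * |a * x + b - b| := by
        rw [← abs_inv, ← abs_mul]
        congr 1
        field_simp
        ring
      have h1 : |a * x + b - b| ≤ (1 + |b|) * (1 + |a * x + b|) := by
        nlinarith [abs_sub (a*x+b) b, abs_nonneg (a*x+b), abs_nonneg b]
      simp only [Real.norm_eq_abs, pow_one]
      rw [h0, mul_assoc]
      gcongr⟩

@[simp] lemma affineCLM_apply (a b : ℝ) (ha : a ≠ 0) (f : 𝓢(ℝ, ℂ)) (x : ℝ) :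
    affineCLM a b ha f x = f (a * x + b) := rfl

/-- Complex conjugation of a Schwartz function. -/
def conjS (f : 𝓢(ℝ, ℂ)) : 𝓢(ℝ, ℂ) where
  toFun := fun x ↦ (starRingEnd ℂ) (f x)
  smooth' := Complex.conjCLE.toContinuousLinearMap.contDiff.comp (f.smooth ⊤)
  decay' := by
    intro k n
    obtain ⟨C, hC⟩ := f.decay' k n
    refine ⟨C, fun x ↦ ?_⟩
    have : (fun x ↦ (starRingEnd ℂ) (f x)) = Complex.conjLIE ∘ f := rfl
    rw [this, LinearIsometryEquiv.norm_iteratedFDeriv_comp_left]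
    exact hC x

@[simp] lemma conjS_apply (f : 𝓢(ℝ, ℂ)) (x : ℝ) : conjS f x = (starRingEnd ℂ) (f x) := rfl

lemma schwartz_temperate (f : 𝓢(ℝ, ℂ)) : Function.HasTemperateGrowth ⇑f := by
  refine ⟨f.smooth', fun n ↦ ⟨0, ?_⟩⟩
  obtain ⟨C, hC⟩ := f.decay' 0 n
  exact ⟨C, fun x ↦ by have h := hC x; simp only [pow_zero, one_mul, mul_one] at h ⊢; exact h⟩

/-- Pointwise product of Schwartz functions. -/
def mulS (f g : 𝓢(ℝ, ℂ)) : 𝓢(ℝ, ℂ) :=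
  SchwartzMap.bilinLeftCLM (ContinuousLinearMap.mul ℝ ℂ) (schwartz_temperate g) f

@[simp] lemma mulS_apply (f g : 𝓢(ℝ, ℂ)) (x : ℝ) : mulS f g x = f x * g x := rfl

/-! ### Plancherel and Parseval -/

lemma flip_key {f h : ℝ → ℂ} (hf : Integrable f) (hh : Integrable h) :
    ∫ ξ : ℝ, 𝓕 f ξ * h ξ = ∫ x : ℝ, f x * 𝓕 h x := by
  have := VectorFourier.integral_fourierIntegral_smul_eq_flip (L := innerₗ ℝ)
    Real.continuous_fourierChar continuous_inner hf hh
  rw [flip_innerₗ] at this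
  simp only [smul_eq_mul] at this; exact this

lemma fourier_conj (g : ℝ → ℂ) (x : ℝ) :
    𝓕 (fun ξ ↦ (starRingEnd ℂ) (g ξ)) x = (starRingEnd ℂ) (𝓕⁻ g x) := by
  rw [Real.fourier_real_eq, Real.fourierInv_eq, ← integral_conj]
  congr 1
  funext v
  have hin : (inner ℝ v x : ℝ) = v * x := Real.inner_apply v x
  simp only [Circle.smul_def, Real.fourierChar_apply, hin, smul_eq_mul, map_mul,
    ← Complex.exp_conj, Complex.conj_ofReal, Complex.conj_I]
  congr 2
  push_cast
  ring

lemma parseval_gen (f : ℝ → ℂ) (hf : Integrable f) (g : 𝓢(ℝ, ℂ)) :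
    ∫ ξ : ℝ, 𝓕 f ξ * (starRingEnd ℂ) (𝓕 (⇑g) ξ) = ∫ x : ℝ, f x * (starRingEnd ℂ) (g x) := by
  have hG : Integrable (𝓕 ⇑g) := (fourierTransformCLM ℝ g).integrable
  set h : 𝓢(ℝ, ℂ) := conjS (fourierTransformCLM ℝ g) with hh_def
  have hcoe : ⇑h = fun ξ ↦ (starRingEnd ℂ) (𝓕 (⇑g) ξ) := by
    funext ξ; simp [hh_def]; rfl
  have key := flip_key hf (h.integrable (μ := volume))
  rw [hcoe] at key
  rw [key]
  congr 1
  funext x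
  rw [fourier_conj, g.continuous.fourierInv_fourier_eq (g.integrable) hG]

lemma plancherel (g : 𝓢(ℝ, ℂ)) : ∫ ξ : ℝ, ‖𝓕 (⇑g) ξ‖ ^ 2 = ∫ x : ℝ, ‖g x‖ ^ 2 := by
  have h := parseval_gen ⇑g (g.integrable) g
  apply Complex.ofReal_injective
  calc (↑(∫ ξ : ℝ, ‖𝓕 (⇑g) ξ‖ ^ 2) : ℂ) = ∫ ξ : ℝ, ((‖𝓕 (⇑g) ξ‖ ^ 2 : ℝ) : ℂ) :=
        integral_ofReal.symm
    _ = ∫ ξ : ℝ, 𝓕 (⇑g) ξ * (starRingEnd ℂ) (𝓕 (⇑g) ξ) := by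
        congr 1; funext ξ; rw [Complex.mul_conj']; push_cast; ring
    _ = ∫ x : ℝ, g x * (starRingEnd ℂ) (g x) := h
    _ = ∫ x : ℝ, ((‖g x‖ ^ 2 : ℝ) : ℂ) := by
        congr 1; funext x; rw [Complex.mul_conj']; push_cast; ring
    _ = _ := integral_ofReal

/-- The physicists' Fourier integral (without normalization). -/
def fint (f : 𝓢(ℝ, ℂ)) (m : ℝ) : ℂ := ∫ x : ℝ, Complex.exp (-Complex.I * m * x) * f x

lemma fhat_eq_fint (f : 𝓢(ℝ, ℂ)) (m : ℝ) :
    fhat f m = ((1 / Real.sqrt (2 * Real.pi) : ℝ) : ℂ) * fint f m := rfl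

lemma fint_eq_fourier (f : 𝓢(ℝ, ℂ)) (m : ℝ) : fint f m = 𝓕 (⇑f) (m / (2 * π)) := by
  rw [fint, Real.fourier_real_eq_integral_exp_smul]
  congr 1
  funext x
  rw [smul_eq_mul]
  congr 1
  have hπ : (π : ℝ) ≠ 0 := Real.pi_ne_zero
  have : -2 * π * x * (m / (2 * π)) = -(m * x) := by field_simp
  rw [this]
  push_cast
  ring

/-- Key lemma: the square-integral of the physicists' Fourier integral. -/
lemma fint_sq_integral (f : 𝓢(ℝ, ℂ)) :
    ∫ p : ℝ, ‖fint f p‖ ^ 2 = (2 * π) * ∫ x : ℝ, ‖f x‖ ^ 2 := by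
  have h1 : ∀ p : ℝ, ‖fint f p‖ ^ 2 = (fun y ↦ ‖𝓕 (⇑f) y‖ ^ 2) (p / (2 * π)) := by
    intro p; rw [fint_eq_fourier]
  simp_rw [h1]
  rw [MeasureTheory.Measure.integral_comp_div (fun y ↦ ‖𝓕 (⇑f) y‖ ^ 2) (2 * π)]
  rw [plancherel, abs_of_pos (by positivity : (0:ℝ) < 2 * π), smul_eq_mul]

lemma integral_comp_sub (f : ℝ → ℂ) (q : ℝ) : ∫ x : ℝ, f (q - x) = ∫ x : ℝ, f x := by
  have h1 := integral_neg_eq_self (fun y : ℝ ↦ f (q + y)) volume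
  have h2 := integral_add_left_eq_self (μ := volume) (fun y : ℝ ↦ f y) q
  simp only [← sub_eq_add_neg] at h1
  rw [h1, h2]

end Aux

/-- Convolution of marginals for the covariant phase space observable generated by the
density operator `σ = |φ⟩⟨φ|`, evaluated on the state `ρ = |ψ⟩⟨ψ|`: the density of the
position marginal `M^Q_ρ` is the convolution of the position densities of `ρ` and `σ`,
and the density of the momentum marginal `M^P_ρ` is the convolution of the momentum
densities, i.e. `M^Q_ρ = E^Q_ρ ∗ E^Q_σ` and `M^P_ρ = E^P_ρ ∗ E^P_σ`. -/
theorem covariant_marginals_convolve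
    (ψ φ : SchwartzMap ℝ ℂ)
    (hψ : ∫ x : ℝ, ‖ψ x‖ ^ 2 = 1) (hφ : ∫ x : ℝ, ‖φ x‖ ^ 2 = 1) :
    (∀ q : ℝ,
      (1 / (2 * Real.pi)) * ∫ p : ℝ, ‖weylMatrixElement ψ φ q p‖ ^ 2 =
        ∫ x : ℝ, ‖ψ x‖ ^ 2 * ‖φ (q - x)‖ ^ 2) ∧
    (∀ p : ℝ,
      (1 / (2 * Real.pi)) * ∫ q : ℝ, ‖weylMatrixElement ψ φ q p‖ ^ 2 =
        ∫ k : ℝ, ‖fhat ψ k‖ ^ 2 * ‖fhat φ (p - k)‖ ^ 2) := by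
  have hπ : (0:ℝ) < 2 * Real.pi := by positivity
  constructor
  · intro q
    set g : SchwartzMap ℝ ℂ := mulS (conjS ψ) (affineCLM (-1) q (by norm_num) φ) with hg_def
    have hg : ∀ x : ℝ, g x = (starRingEnd ℂ) (ψ x) * φ (q - x) := by
      intro x
      rw [hg_def, mulS_apply, conjS_apply, affineCLM_apply,
        show (-1 : ℝ) * x + q = q - x from by ring]
    have hW : ∀ p : ℝ, ‖weylMatrixElement ψ φ q p‖ ^ 2 = ‖fint g (-p)‖ ^ 2 := by
      intro p
      have h1 : weylMatrixElement ψ φ q p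
          = Complex.exp (-Complex.I * q * p / 2) * fint g (-p) := by
        rw [weylMatrixElement, fint, ← integral_const_mul]
        congr 1
        funext x
        rw [hg x, show (-Complex.I * ((-p : ℝ) : ℂ) * (x:ℂ)) = Complex.I * p * x from by
          push_cast; ring, Complex.exp_add]
        ring
      have h2 : ‖Complex.exp (-Complex.I * q * p / 2)‖ = 1 := by
        rw [show (-Complex.I * q * p / 2 : ℂ) = ((-(q * p) / 2 : ℝ) : ℂ) * Complex.I from by
          push_cast; ring]
        rw [Complex.norm_exp_ofReal_mul_I]
      rw [h1, norm_mul, h2, one_mul]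
    calc (1 / (2 * Real.pi)) * ∫ p : ℝ, ‖weylMatrixElement ψ φ q p‖ ^ 2
        = (1 / (2 * Real.pi)) * ∫ p : ℝ, ‖fint g (-p)‖ ^ 2 := by simp_rw [hW]
      _ = (1 / (2 * Real.pi)) * ∫ p : ℝ, ‖fint g p‖ ^ 2 := by
          rw [integral_neg_eq_self (fun p : ℝ ↦ ‖fint g p‖ ^ 2) volume]
      _ = (1 / (2 * Real.pi)) * ((2 * Real.pi) * ∫ x : ℝ, ‖g x‖ ^ 2) := by
          rw [fint_sq_integral]
      _ = ∫ x : ℝ, ‖g x‖ ^ 2 := by field_simp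
      _ = ∫ x : ℝ, ‖ψ x‖ ^ 2 * ‖φ (q - x)‖ ^ 2 := by
          congr 1
          funext x
          rw [hg x, norm_mul, RCLike.norm_conj, mul_pow]
  · intro p
    have h2πs : Real.sqrt (2 * Real.pi) ≠ 0 := by positivity
    set c : ℝ := 1 / Real.sqrt (2 * Real.pi) with hc
    have hc2 : (c : ℂ) * (c : ℂ) = ((1 / (2 * Real.pi) : ℝ) : ℂ) := by
      rw [← Complex.ofReal_mul]
      congr 1
      rw [hc, div_mul_div_comm, one_mul, Real.mul_self_sqrt (by positivity)]
    set Fψ : SchwartzMap ℝ ℂ := SchwartzMap.fourierTransformCLM ℝ ψ with hFψ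
    set Fφ : SchwartzMap ℝ ℂ := SchwartzMap.fourierTransformCLM ℝ φ with hFφ
    set G : SchwartzMap ℝ ℂ := (c ^ 2 : ℝ) •
      mulS (conjS (affineCLM (1 / (2 * Real.pi)) 0 (by positivity) Fψ))
        (affineCLM (-(1 / (2 * Real.pi))) (p / (2 * Real.pi)) (neg_ne_zero.mpr (by positivity)) Fφ) with hG_def
    have hG : ∀ k : ℝ, G k = (starRingEnd ℂ) (fhat ψ k) * fhat φ (p - k) := by
      intro k
      have e1 : fhat ψ k = (c : ℂ) * Fψ (1 / (2 * Real.pi) * k + 0) := by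
        rw [fhat_eq_fint, fint_eq_fourier, hFψ, SchwartzMap.fourierTransformCLM_apply, SchwartzMap.fourier_coe]
        congr 2
        ring
      have e2 : fhat φ (p - k) = (c : ℂ) * Fφ (-(1 / (2 * Real.pi)) * k + p / (2 * Real.pi)) := by
        rw [fhat_eq_fint, fint_eq_fourier, hFφ, SchwartzMap.fourierTransformCLM_apply, SchwartzMap.fourier_coe]
        congr 2
        ring
      rw [hG_def, SchwartzMap.smul_apply, mulS_apply, conjS_apply, affineCLM_apply,
        affineCLM_apply, e1, e2, map_mul, Complex.conj_ofReal]
      rw [Complex.real_smul]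
      push_cast
      ring
    have key : ∀ q : ℝ, ‖weylMatrixElement ψ φ q p‖ ^ 2 = ‖fint G q‖ ^ 2 := by
      intro q
      set v : ℝ → ℂ := fun x ↦ Complex.exp (Complex.I * p * x) * φ (q - x) with hv_def
      have hv : MeasureTheory.Integrable v := by
        have hw : MeasureTheory.Integrable (fun x : ℝ ↦ φ (q - x)) := by
          have := (affineCLM (-1) q (by norm_num) φ).integrable (μ := volume)
          convert this using 2 with x
          rw [affineCLM_apply]
          congr 1
          ring
        refine hw.bdd_mul (c := 1) ?_ (Filter.Eventually.of_forall fun x ↦ ?_)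
        · exact (Complex.continuous_exp.comp (by continuity)).aestronglyMeasurable
        · rw [show (Complex.I * p * x : ℂ) = ((p * x : ℝ) : ℂ) * Complex.I from by
            push_cast; ring]
          rw [Complex.norm_exp_ofReal_mul_I]
      -- Fourier transform of v
      set Fbig : ℝ → ℂ := fun k ↦ Complex.exp (-Complex.I * q * k) *
        (fint φ (p - k) * (starRingEnd ℂ) (fint ψ k)) with hFbig_def
      have hFv : ∀ ξ : ℝ, FourierTransform.fourier v ξ * (starRingEnd ℂ) (FourierTransform.fourier (⇑ψ) ξ)
          = Complex.exp (Complex.I * p * q) * Fbig (2 * Real.pi * ξ) := by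
        intro ξ
        set Φ : ℝ → ℂ := fun y ↦
          Complex.exp (((-2 * Real.pi * y * ξ : ℝ) : ℂ) * Complex.I + Complex.I * p * y) *
            φ (q - y) with hΦ_def
        have h1 : FourierTransform.fourier v ξ = ∫ x : ℝ, Φ x := by
          rw [Real.fourier_real_eq_integral_exp_smul]
          congr 1
          funext x
          rw [hv_def, hΦ_def, smul_eq_mul, ← mul_assoc, ← Complex.exp_add]
        have h2 : ∀ x : ℝ, Φ (q - x) = Complex.exp (Complex.I * p * q) *
            (Complex.exp (-Complex.I * q * (2 * Real.pi * ξ)) *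
              (Complex.exp (-Complex.I * ((p - 2 * Real.pi * ξ : ℝ) : ℂ) * x) * φ x)) := by
          intro x
          rw [hΦ_def]
          simp only [sub_sub_cancel]
          rw [← mul_assoc, ← mul_assoc, ← Complex.exp_add, ← Complex.exp_add]
          congr 2
          push_cast
          ring
        have h3 : FourierTransform.fourier (⇑ψ) ξ = fint ψ (2 * Real.pi * ξ) := by
          rw [fint_eq_fourier]
          congr 1
          field_simp
        rw [h1, ← integral_comp_sub Φ q]
        simp_rw [h2]
        rw [integral_const_mul, integral_const_mul, h3, hFbig_def]
        have : (∫ x : ℝ, Complex.exp (-Complex.I * ((p - 2 * Real.pi * ξ : ℝ) : ℂ) * x) * φ x)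
            = fint φ (p - 2 * Real.pi * ξ) := rfl
        rw [this]
        push_cast
        ring_nf
      have hWval : weylMatrixElement ψ φ q p = Complex.exp (-Complex.I * q * p / 2) *
          ∫ x : ℝ, v x * (starRingEnd ℂ) (ψ x) := by
        rw [weylMatrixElement, ← integral_const_mul]
        congr 1
        funext x
        rw [hv_def, Complex.exp_add]
        ring
      have hPar := parseval_gen v hv ψ
      have hInt : (∫ x : ℝ, v x * (starRingEnd ℂ) (ψ x))
          = Complex.exp (Complex.I * p * q) * (((2 * Real.pi)⁻¹ : ℝ) • ∫ k : ℝ, Fbig k) := by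
        rw [← hPar]
        calc (∫ ξ : ℝ, FourierTransform.fourier v ξ * (starRingEnd ℂ) (FourierTransform.fourier (⇑ψ) ξ))
            = ∫ ξ : ℝ, Complex.exp (Complex.I * p * q) * Fbig (2 * Real.pi * ξ) := by
              simp_rw [hFv]
          _ = Complex.exp (Complex.I * p * q) * ∫ ξ : ℝ, Fbig (2 * Real.pi * ξ) :=
              integral_const_mul _ _
          _ = _ := by
              rw [MeasureTheory.Measure.integral_comp_mul_left Fbig (2 * Real.pi),
                abs_of_pos (by positivity : (0:ℝ) < (2 * Real.pi)⁻¹)]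
      have hGq : fint G q = ((1 / (2 * Real.pi) : ℝ) : ℂ) * ∫ k : ℝ, Fbig k := by
        rw [fint, ← integral_const_mul]
        congr 1
        funext k
        rw [hG k, hFbig_def]
        rw [fhat_eq_fint, fhat_eq_fint, map_mul, Complex.conj_ofReal, ← hc2]
        ring
      rw [hWval, hInt, hGq]
      rw [norm_mul, norm_mul, norm_mul, Complex.real_smul, norm_mul]
      rw [show (-Complex.I * q * p / 2 : ℂ) = ((-(q * p) / 2 : ℝ) : ℂ) * Complex.I from by
        push_cast; ring]
      rw [show (Complex.I * p * q : ℂ) = ((p * q : ℝ) : ℂ) * Complex.I from by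
        push_cast; ring]
      simp only [Complex.norm_exp_ofReal_mul_I]
      norm_num
    calc (1 / (2 * Real.pi)) * ∫ q : ℝ, ‖weylMatrixElement ψ φ q p‖ ^ 2
        = (1 / (2 * Real.pi)) * ∫ q : ℝ, ‖fint G q‖ ^ 2 := by simp_rw [key]
      _ = (1 / (2 * Real.pi)) * ((2 * Real.pi) * ∫ k : ℝ, ‖G k‖ ^ 2) := by
          rw [fint_sq_integral]
      _ = ∫ k : ℝ, ‖G k‖ ^ 2 := by field_simp
      _ = ∫ k : ℝ, ‖fhat ψ k‖ ^ 2 * ‖fhat φ (p - k)‖ ^ 2 := by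
          congr 1
          funext k
          rw [hG k, norm_mul, RCLike.norm_conj, mul_pow]


end
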